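/- Let Σ be a d × d diagonal complex matrix with real diagonal entries σ_1 ≥ σ_2 ≥ … ≥ σ_d ≥ 0. Then the value Σ_{i=1}^{d} σ_i σ_{d+1-i} is the least element of the set { Tr √((Σ * U * Σ)ᴴ * (Σ * U * Σ)) : U ∈ Matrix.unitaryGroup (Fin d) ℂ }; the minimum is attained when U is the antidiagonal permutation matrix, which pairs the largest Schmidt coefficients with the smallest. -/

import Mathlib

open Matrix ComplexOrder

/-- The square root of a positive semidefinite matrix, as defined in Mathlib before its removal. -/
noncomputable def Matrix.PosSemidef.sqrt {n 𝕜 : Type*} [Fintype n] [DecidableEq n] [RCLike 𝕜]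
    {A : Matrix n n 𝕜} (hA : A.PosSemidef) : Matrix n n 𝕜 :=
  hA.1.eigenvectorUnitary.1 * diagonal ((↑) ∘ (√·) ∘ hA.1.eigenvalues) *
    (star hA.1.eigenvectorUnitary : Matrix n n 𝕜)

open scoped MatrixOrder in
lemma Matrix.PosSemidef.eq_sqrt_of_sq_eq {n 𝕜 : Type*} [Fintype n] [DecidableEq n] [RCLike 𝕜]
    {A : Matrix n n 𝕜} (hA : A.PosSemidef) {B : Matrix n n 𝕜} (hB : B.PosSemidef)
    (hAB : A ^ 2 = B) : A = hB.sqrt := by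
  have h1 : hB.sqrt = cfc Real.sqrt B := by
    rw [hB.1.cfc_eq]
    simp [IsHermitian.cfc, Unitary.conjStarAlgAut_apply, Matrix.PosSemidef.sqrt, Function.comp_def]
  rw [h1, ← cfcₙ_eq_cfc (f := Real.sqrt) (a := B) Real.continuous_sqrt.continuousOn Real.sqrt_zero,
    ← CFC.sqrt_eq_real_sqrt B hB.nonneg]
  exact (CFC.sqrt_unique (by rw [← pow_two]; exact hAB) hA.nonneg).symm

lemma re_trace_mul_le_trace_sqrt {d : ℕ} (X W : Matrix (Fin d) (Fin d) ℂ)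
    (hW : W ∈ Matrix.unitaryGroup (Fin d) ℂ) :
    (Matrix.trace (W * X)).re ≤
      (Matrix.trace ((Matrix.posSemidef_conjTranspose_mul_self X).sqrt)).re := by
  set hH := Matrix.posSemidef_conjTranspose_mul_self X with hHdef
  set P : Matrix (Fin d) (Fin d) ℂ := (hH.1.eigenvectorUnitary : Matrix (Fin d) (Fin d) ℂ) with hPdef
  set μ : Fin d → ℝ := hH.1.eigenvalues with hμdef
  have hPmem : P ∈ Matrix.unitaryGroup (Fin d) ℂ := hH.1.eigenvectorUnitary.2
  have hPP : P * star P = 1 := mem_unitaryGroup_iff.mp hPmem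
  have hPP' : star P * P = 1 := mem_unitaryGroup_iff'.mp hPmem
  have hWW : W * star W = 1 := mem_unitaryGroup_iff.mp hW
  have hWW' : star W * W = 1 := mem_unitaryGroup_iff'.mp hW
  have hμ0 : ∀ j, 0 ≤ μ j := hH.eigenvalues_nonneg
  -- trace of the sqrt
  have hsq : hH.sqrt = P * diagonal ((↑) ∘ Real.sqrt ∘ μ) * star P := rfl
  have htr : (Matrix.trace hH.sqrt).re = ∑ j, Real.sqrt (μ j) := by
    rw [hsq, Matrix.trace_mul_cycle, hPP', Matrix.one_mul, Matrix.trace_diagonal]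
    simp [Complex.re_sum]
  have hPPc : P * Pᴴ = 1 := hPP
  have hPPc' : Pᴴ * P = 1 := hPP'
  have h3 : ∀ z : ℂ, star z * z = ((‖z‖ ^ 2 : ℝ) : ℂ) := fun z => by
    rw [RCLike.star_def, mul_comm, Complex.mul_conj, Complex.normSq_eq_norm_sq]
  set Z := X * P with hZdef
  set V := Wᴴ * P with hVdef
  have hZZ : Zᴴ * Z = diagonal (RCLike.ofReal ∘ μ) := by
    rw [hZdef, conjTranspose_mul]
    calc Pᴴ * Xᴴ * (X * P) = Pᴴ * (Xᴴ * X) * P := by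
          simp only [Matrix.mul_assoc]
      _ = diagonal (RCLike.ofReal ∘ μ) := by
          rw [hH.1.spectral_theorem]
          simp only [Matrix.star_eq_conjTranspose, ← hPdef, ← hμdef]
          calc Pᴴ * (P * diagonal (RCLike.ofReal ∘ μ) * Pᴴ) * P
              = Pᴴ * P * diagonal (RCLike.ofReal ∘ μ) * (Pᴴ * P) := by
                simp only [Matrix.mul_assoc]
            _ = diagonal (RCLike.ofReal ∘ μ) := by
                rw [hPPc', Matrix.one_mul, Matrix.mul_one]
  have hVV : Vᴴ * V = 1 := by
    rw [hVdef, conjTranspose_mul, conjTranspose_conjTranspose]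
    calc Pᴴ * W * (Wᴴ * P) = Pᴴ * (W * Wᴴ) * P := by simp only [Matrix.mul_assoc]
      _ = 1 := by rw [show W * Wᴴ = 1 from hWW, Matrix.mul_one, hPPc']
  have hZcol : ∀ j, ∑ k, ‖Z k j‖ ^ 2 = μ j := by
    intro j
    have h := congrFun (congrFun hZZ j) j
    rw [Matrix.mul_apply, Matrix.diagonal_apply_eq] at h
    simp only [Matrix.conjTranspose_apply, h3, Function.comp_apply] at h
    have h2 := congrArg Complex.re h
    simpa [RCLike.ofReal, Complex.re_sum, ← Complex.ofReal_pow] using h2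
  have hVcol : ∀ j, ∑ k, ‖V k j‖ ^ 2 = 1 := by
    intro j
    have h := congrFun (congrFun hVV j) j
    rw [Matrix.mul_apply, Matrix.one_apply_eq] at h
    simp only [Matrix.conjTranspose_apply, h3] at h
    have h2 := congrArg Complex.re h
    simpa [Complex.re_sum, ← Complex.ofReal_pow] using h2
  -- rewrite the trace
  have hPW : Pᴴ * W = Vᴴ := by
    rw [hVdef, conjTranspose_mul, conjTranspose_conjTranspose]
  have htrW : Matrix.trace (W * X) = ∑ j, ∑ k, (starRingEnd ℂ) (V k j) * Z k j := by
    have h1 : (Pᴴ * W) * Z = Pᴴ * (W * X * P) := by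
      simp only [hZdef, Matrix.mul_assoc]
    have h2 : Matrix.trace ((Pᴴ * W) * Z) = Matrix.trace (W * X) := by
      rw [h1, Matrix.trace_mul_comm, Matrix.mul_assoc (W * X) P Pᴴ, hPPc, Matrix.mul_one]
    rw [← h2, Matrix.trace]
    simp only [Matrix.diag_apply, Matrix.mul_apply, hPW, Matrix.conjTranspose_apply,
      RCLike.star_def]
  -- Cauchy-Schwarz columnwise
  have key : ∀ j, (∑ k, (starRingEnd ℂ) (V k j) * Z k j).re ≤ Real.sqrt (μ j) := by
    intro j
    set v : EuclideanSpace ℂ (Fin d) := WithLp.toLp 2 (fun k => V k j) with hv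
    set w : EuclideanSpace ℂ (Fin d) := WithLp.toLp 2 (fun k => Z k j) with hw
    have hinner : (inner ℂ v w : ℂ) = ∑ k, (starRingEnd ℂ) (V k j) * Z k j := by
      simp [PiLp.inner_apply, hv, hw, RCLike.inner_apply, mul_comm]
    have hnv : ‖v‖ = 1 := by
      rw [EuclideanSpace.norm_eq]
      simp only [hv]
      rw [show ∑ k, ‖V k j‖ ^ 2 = 1 from hVcol j, Real.sqrt_one]
    have hnw : ‖w‖ = Real.sqrt (μ j) := by
      rw [EuclideanSpace.norm_eq]
      simp only [hw]
      rw [show ∑ k, ‖Z k j‖ ^ 2 = μ j from hZcol j]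
    calc (∑ k, (starRingEnd ℂ) (V k j) * Z k j).re = (inner ℂ v w : ℂ).re := by
          rw [hinner]
      _ ≤ ‖(inner ℂ v w : ℂ)‖ := Complex.re_le_norm _
      _ ≤ ‖v‖ * ‖w‖ := norm_inner_le_norm v w
      _ = Real.sqrt (μ j) := by rw [hnv, hnw, one_mul]
  calc (Matrix.trace (W * X)).re = ∑ j, (∑ k, (starRingEnd ℂ) (V k j) * Z k j).re := by
        rw [htrW]; simp [Complex.re_sum]
    _ ≤ ∑ j, Real.sqrt (μ j) := Finset.sum_le_sum fun j _ => key j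
    _ = (Matrix.trace hH.sqrt).re := htr.symm

lemma ds_lower {d : ℕ} (σ : Fin d → ℝ) (hmono : Antitone σ)
    {D : Matrix (Fin d) (Fin d) ℝ} (hD : D ∈ doublyStochastic ℝ (Fin d)) :
    ∑ i : Fin d, σ i * σ i.rev ≤ ∑ i : Fin d, ∑ k : Fin d, σ i * σ k * D k i := by
  have hanti : Antivary (σ ∘ Fin.rev) σ := by
    intro i j hij
    have hji : j < i := by
      by_contra h
      push_neg at h
      exact absurd hij (not_lt.2 (hmono h))
    exact hmono (Fin.rev_lt_rev.mpr hji).le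
  have hperm : ∀ π : Equiv.Perm (Fin d),
      ∑ i : Fin d, σ i * σ i.rev ≤ ∑ k : Fin d, σ (π k) * σ k := by
    intro π
    have h := hanti.sum_mul_le_sum_comp_perm_mul (σ := π.trans Fin.revPerm)
    calc ∑ i : Fin d, σ i * σ i.rev = ∑ i : Fin d, (σ ∘ Fin.rev) i * σ i := by
          exact Finset.sum_congr rfl fun i _ => mul_comm _ _
      _ ≤ ∑ i : Fin d, (σ ∘ Fin.rev) ((π.trans Fin.revPerm) i) * σ i := h
      _ = ∑ k : Fin d, σ (π k) * σ k := by
          refine Finset.sum_congr rfl fun i _ => ?_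
          simp [Equiv.trans_apply, Function.comp, Fin.rev_rev]
  obtain ⟨w, hw0, hw1, hwD⟩ := exists_eq_sum_perm_of_mem_doublyStochastic hD
  have h1 : ∀ k i, D k i = ∑ π : Equiv.Perm (Fin d), if π k = i then w π else 0 := by
    intro k i
    rw [← hwD]
    simp [Matrix.sum_apply, Equiv.Perm.permMatrix, PEquiv.toMatrix_apply,
      Equiv.toPEquiv_apply]
  have h2 : ∀ i : Fin d, ∑ k : Fin d, σ i * σ k * D k i
      = ∑ π : Equiv.Perm (Fin d), w π * (σ i * σ (π⁻¹ i)) := by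
    intro i
    simp only [h1, Finset.mul_sum, mul_ite, mul_zero]
    rw [Finset.sum_comm]
    refine Finset.sum_congr rfl fun π _ => ?_
    rw [Finset.sum_eq_single (π⁻¹ i)]
    · simp [mul_comm]
    · intro k _ hk
      rw [if_neg]
      intro h
      exact hk (by rw [← h]; simp)
    · simp
  have expand : ∑ i : Fin d, ∑ k : Fin d, σ i * σ k * D k i
      = ∑ π : Equiv.Perm (Fin d), w π * ∑ k : Fin d, σ (π k) * σ k := by
    calc ∑ i : Fin d, ∑ k : Fin d, σ i * σ k * D k i
        = ∑ i : Fin d, ∑ π : Equiv.Perm (Fin d), w π * (σ i * σ (π⁻¹ i)) :=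
          Finset.sum_congr rfl fun i _ => h2 i
      _ = ∑ π : Equiv.Perm (Fin d), ∑ i : Fin d, w π * (σ i * σ (π⁻¹ i)) :=
          Finset.sum_comm
      _ = ∑ π : Equiv.Perm (Fin d), w π * ∑ i : Fin d, σ i * σ (π⁻¹ i) := by
          simp [Finset.mul_sum]
      _ = ∑ π : Equiv.Perm (Fin d), w π * ∑ k : Fin d, σ (π k) * σ k := by
          refine Finset.sum_congr rfl fun π _ => ?_
          congr 1
          rw [← Equiv.sum_comp π (fun i => σ i * σ (π⁻¹ i))]
          simp
  calc ∑ i : Fin d, σ i * σ i.rev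
      = ∑ π : Equiv.Perm (Fin d), w π * ∑ i : Fin d, σ i * σ i.rev := by
        rw [← Finset.sum_mul, hw1, one_mul]
    _ ≤ ∑ π : Equiv.Perm (Fin d), w π * ∑ k : Fin d, σ (π k) * σ k :=
        Finset.sum_le_sum fun π _ => mul_le_mul_of_nonneg_left (hperm π) (hw0 π)
    _ = ∑ i : Fin d, ∑ k : Fin d, σ i * σ k * D k i := expand.symm


/-- For a Schmidt matrix `S = diagonal σ` with `σ` nonincreasing and
nonnegative, the value `∑ i, σ_i σ_{d+1-i}` is the least value of the trace norm
`Tr √((S U S)ᴴ (S U S)) = Tr|S U S|` over unitary `U`; the minimum is attained by the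
antidiagonal permutation matrix, pairing largest with smallest Schmidt coefficients. -/
theorem minimum_fidelity_isLeast
    {d : ℕ} (σ : Fin d → ℝ) (hmono : Antitone σ) (hσ : ∀ i, 0 ≤ σ i)
    (S : Matrix (Fin d) (Fin d) ℂ) (hS : S = Matrix.diagonal (fun i => (σ i : ℂ))) :
    IsLeast
      {r : ℝ | ∃ U ∈ Matrix.unitaryGroup (Fin d) ℂ,
        r = (Matrix.trace
          ((Matrix.posSemidef_conjTranspose_mul_self (S * U * S)).sqrt)).re}
      (∑ i : Fin d, σ i * σ i.rev) := by
  subst hS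
  set S := Matrix.diagonal (fun i => (σ i : ℂ)) with hSdef
  have h3 : ∀ z : ℂ, star z * z = ((‖z‖ ^ 2 : ℝ) : ℂ) := fun z => by
    rw [RCLike.star_def, mul_comm, Complex.mul_conj, Complex.normSq_eq_norm_sq]
  constructor
  · -- attained by the antidiagonal permutation
    set U₀ : Matrix (Fin d) (Fin d) ℂ :=
      Matrix.of (fun i j => if j = i.rev then 1 else 0) with hU₀def
    have hU₀e : ∀ i j, U₀ i j = if j = i.rev then 1 else 0 := fun i j => rfl
    have hU₀mem : U₀ ∈ Matrix.unitaryGroup (Fin d) ℂ := by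
      rw [Matrix.mem_unitaryGroup_iff']
      ext i j
      simp only [Matrix.mul_apply, Matrix.star_apply, hU₀e, Matrix.one_apply]
      rw [Finset.sum_eq_single i.rev]
      · simp [Fin.rev_rev, eq_comm]
      · intro k _ hk
        rw [if_neg, star_zero, zero_mul]
        intro h
        exact hk (by rw [h, Fin.rev_rev])
      · simp
    set X₀ := S * U₀ * S with hX₀def
    have hX₀e : ∀ k i, X₀ k i = if i = k.rev then (σ k : ℂ) * (σ i : ℂ) else 0 := by
      intro k i
      rw [hX₀def, Matrix.mul_diagonal, Matrix.diagonal_mul, hU₀e]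
      split <;> ring
    set B : Matrix (Fin d) (Fin d) ℂ :=
      Matrix.diagonal (fun i => ((σ i * σ i.rev : ℝ) : ℂ)) with hBdef
    have hB : B.PosSemidef := by
      refine Matrix.posSemidef_diagonal_iff.mpr fun i => ?_
      rw [Complex.zero_le_real]
      exact mul_nonneg (hσ i) (hσ i.rev)
    have hB2 : B ^ 2 = X₀ᴴ * X₀ := by
      rw [pow_two, hBdef, Matrix.diagonal_mul_diagonal]
      ext i j
      rw [Matrix.mul_apply]
      simp only [Matrix.conjTranspose_apply, hX₀e]
      rw [Finset.sum_eq_single i.rev]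
      · simp only [Fin.rev_rev]
        rw [Matrix.diagonal_apply]
        by_cases hij : i = j
        · subst hij
          simp only [eq_self_iff_true, if_true]
          rw [RCLike.star_def, _root_.map_mul, Complex.conj_ofReal, Complex.conj_ofReal]
          push_cast
          ring
        · rw [if_neg hij, if_neg (show ¬(j = i) from fun h => hij h.symm), mul_zero]
      · intro k _ hk
        rw [if_neg, star_zero, zero_mul]
        intro h
        exact hk (by rw [h, Fin.rev_rev])
      · simp
    have hsqrt : B = (Matrix.posSemidef_conjTranspose_mul_self X₀).sqrt :=
      hB.eq_sqrt_of_sq_eq _ hB2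
    refine ⟨U₀, hU₀mem, ?_⟩
    rw [← hX₀def, ← hsqrt, hBdef, Matrix.trace_diagonal]
    simp [Complex.re_sum]
  · -- lower bound
    rintro r ⟨U, hU, rfl⟩
    have hUU : U * star U = 1 := Matrix.mem_unitaryGroup_iff.mp hU
    have hUU' : star U * U = 1 := Matrix.mem_unitaryGroup_iff'.mp hU
    have hU' : star U ∈ Matrix.unitaryGroup (Fin d) ℂ := by
      rw [Matrix.mem_unitaryGroup_iff, star_star]
      exact hUU'
    have key := re_trace_mul_le_trace_sqrt (S * U * S) (star U) hU'
    refine le_trans ?_ key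
    set D : Matrix (Fin d) (Fin d) ℝ := Matrix.of (fun k i => ‖U k i‖ ^ 2) with hDdef
    have hDe : ∀ k i, D k i = ‖U k i‖ ^ 2 := fun k i => rfl
    have hrow : ∀ k, ∑ i, D k i = 1 := by
      intro k
      have h := congrFun (congrFun hUU k) k
      rw [Matrix.mul_apply, Matrix.one_apply_eq] at h
      have h2 := congrArg Complex.re h
      simp only [Matrix.star_apply] at h
      have : ∀ i, U k i * star (U k i) = ((‖U k i‖ ^ 2 : ℝ) : ℂ) := fun i => by
        rw [mul_comm]; exact h3 _
      simp only [Matrix.star_apply, this] at h2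
      simpa [hDe, Complex.re_sum, ← Complex.ofReal_pow] using h2
    have hcol : ∀ i, ∑ k, D k i = 1 := by
      intro i
      have h := congrFun (congrFun hUU' i) i
      rw [Matrix.mul_apply, Matrix.one_apply_eq] at h
      have h2 := congrArg Complex.re h
      simp only [Matrix.star_apply, h3] at h2
      simpa [hDe, Complex.re_sum, ← Complex.ofReal_pow] using h2
    have hDmem : D ∈ doublyStochastic ℝ (Fin d) := by
      rw [mem_doublyStochastic_iff_sum]
      exact ⟨fun k i => by rw [hDe]; positivity, hrow, hcol⟩
    have hentry : ∀ i : Fin d, ((star U * (S * U * S)) i i).re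
        = ∑ k : Fin d, σ i * σ k * D k i := by
      intro i
      rw [Matrix.mul_apply]
      rw [Complex.re_sum]
      refine Finset.sum_congr rfl fun k _ => ?_
      have hS1 : (S * U * S) k i = (σ k : ℂ) * U k i * (σ i : ℂ) := by
        rw [hSdef, Matrix.mul_diagonal, Matrix.diagonal_mul]
      have h4 : star (U k i) * ((σ k : ℂ) * U k i * (σ i : ℂ))
          = ((σ i * σ k * ‖U k i‖ ^ 2 : ℝ) : ℂ) := by
        rw [show star (U k i) * ((σ k : ℂ) * U k i * (σ i : ℂ))
            = (σ i : ℂ) * (σ k : ℂ) * (star (U k i) * U k i) by ring, h3]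
        push_cast
        ring
      rw [Matrix.star_apply, hS1, h4, Complex.ofReal_re, hDe]
    calc ∑ i : Fin d, σ i * σ i.rev
        ≤ ∑ i : Fin d, ∑ k : Fin d, σ i * σ k * D k i := ds_lower σ hmono hDmem
      _ = ∑ i : Fin d, ((star U * (S * U * S)) i i).re :=
          (Finset.sum_congr rfl fun i _ => (hentry i).symm)
      _ = (Matrix.trace (star U * (S * U * S))).re := by
          rw [Matrix.trace]; simp [Complex.re_sum, Matrix.diag_apply]
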